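/- Assume α < (2^{1/(2N)} − 1)/L, so that C₁ := 2 − (1 + αL)^{2N} > 0. Assume the bounded-variance condition ∫_I ‖∇l_{Tᵢ}(w) − ∇l_T(w)‖² dμ(i) ≤ σ² for every w ∈ ℝ^d, where ∇l_T(w) = ∫_I ∇l_{Tᵢ}(w) dμ(i), and assume ‖∇l_{Sᵢ}(v) − ∇l_{Tᵢ}(v)‖ ≤ bᵢ for each i and all v, with b = ∫_I bᵢ dμ(i). Define C₂ = ((1 + αL)^{2N} − 1)σ + (1 + αL)^N ((1 + αL)^N − 1) b and ∇𝓛(w) = ∫_I Gᵢ(w) dμ(i). Then for every w ∈ ℝ^d, ‖∇l_T(w)‖ ≤ (1/C₁) ‖∇𝓛(w)‖ + C₂/C₁. -/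

import Mathlib

open MeasureTheory

noncomputable def innerPath {d : ℕ} (α : ℝ) (l : EuclideanSpace ℝ (Fin d) → ℝ) :
    ℕ → EuclideanSpace ℝ (Fin d) → EuclideanSpace ℝ (Fin d)
  | 0, w => w
  | j + 1, w => innerPath α l j w - α • gradient l (innerPath α l j w)

noncomputable def hessProd {d : ℕ} (α : ℝ) (N : ℕ)
    (lS : EuclideanSpace ℝ (Fin d) → ℝ) (w : EuclideanSpace ℝ (Fin d)) :
    EuclideanSpace ℝ (Fin d) →L[ℝ] EuclideanSpace ℝ (Fin d) :=
  ((List.range N).map fun j =>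
    ContinuousLinearMap.id ℝ (EuclideanSpace ℝ (Fin d)) -
      α • fderiv ℝ (gradient lS) (innerPath α lS j w)).prod

noncomputable def metaGrad {d : ℕ} (α : ℝ) (N : ℕ)
    (lS lT : EuclideanSpace ℝ (Fin d) → ℝ) (w : EuclideanSpace ℝ (Fin d)) :
    EuclideanSpace ℝ (Fin d) :=
  hessProd α N lS w (gradient lT (innerPath α lS N w))

lemma prodBound {R : Type*} [NormedRing R] (h1 : ‖(1:R)‖ ≤ 1) {c : ℝ} (hc : 1 ≤ c)
    (l : List R) (h : ∀ a ∈ l, ‖a‖ ≤ c ∧ ‖a - 1‖ ≤ c - 1) :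
    ‖l.prod‖ ≤ c ^ l.length ∧ ‖l.prod - 1‖ ≤ c ^ l.length - 1 := by
  induction l with
  | nil => simpa using h1
  | cons a l ih =>
    obtain ⟨ha, ha1⟩ := h a List.mem_cons_self
    obtain ⟨hp, hp1⟩ := ih (fun x hx => h x (List.mem_cons_of_mem a hx))
    have hc0 : (0:ℝ) ≤ c := le_trans zero_le_one hc
    have hcn : (1:ℝ) ≤ c ^ l.length := one_le_pow₀ hc
    constructor
    · calc ‖(a :: l).prod‖ = ‖a * l.prod‖ := by rw [List.prod_cons]
        _ ≤ ‖a‖ * ‖l.prod‖ := norm_mul_le _ _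
        _ ≤ c * c ^ l.length := mul_le_mul ha hp (norm_nonneg _) hc0
        _ = c ^ (a :: l).length := by rw [List.length_cons]; ring
    · have heq : (a :: l).prod - 1 = a * (l.prod - 1) + (a - 1) := by
        rw [List.prod_cons]; noncomm_ring
      calc ‖(a :: l).prod - 1‖ = ‖a * (l.prod - 1) + (a - 1)‖ := by rw [heq]
        _ ≤ ‖a * (l.prod - 1)‖ + ‖a - 1‖ := norm_add_le _ _
        _ ≤ ‖a‖ * ‖l.prod - 1‖ + (c - 1) := by
            gcongr; exact norm_mul_le _ _
        _ ≤ c * (c ^ l.length - 1) + (c - 1) := by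
            have := norm_nonneg (l.prod - 1)
            nlinarith
        _ = c ^ (a :: l).length - 1 := by rw [List.length_cons]; ring

lemma gradPath_bound {d : ℕ} {α L : ℝ} (hα : 0 ≤ α) (hL : 0 ≤ L)
    {lS : EuclideanSpace ℝ (Fin d) → ℝ}
    (hgradS : ∀ w u, ‖gradient lS w - gradient lS u‖ ≤ L * ‖w - u‖)
    (w : EuclideanSpace ℝ (Fin d)) :
    ∀ j, ‖gradient lS (innerPath α lS j w)‖ ≤ (1 + α * L) ^ j * ‖gradient lS w‖ := by
  intro j
  induction j with
  | zero => simp [innerPath]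
  | succ j ih =>
    have hstep : innerPath α lS (j+1) w =
        innerPath α lS j w - α • gradient lS (innerPath α lS j w) := rfl
    set v := innerPath α lS j w with hv
    have h1 : ‖gradient lS (innerPath α lS (j+1) w) - gradient lS v‖ ≤
        L * ‖innerPath α lS (j+1) w - v‖ := hgradS _ _
    have h2 : ‖innerPath α lS (j+1) w - v‖ = α * ‖gradient lS v‖ := by
      rw [hstep]; rw [sub_sub_cancel_left]
      rw [norm_neg, norm_smul, Real.norm_of_nonneg hα]
    have h3 : ‖gradient lS (innerPath α lS (j+1) w)‖ ≤ (1 + α * L) * ‖gradient lS v‖ := by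
      have := norm_sub_norm_le (gradient lS (innerPath α lS (j+1) w)) (gradient lS v)
      nlinarith [h1, h2.symm ▸ h1]
    calc ‖gradient lS (innerPath α lS (j+1) w)‖ ≤ (1 + α * L) * ‖gradient lS v‖ := h3
      _ ≤ (1 + α * L) * ((1 + α * L) ^ j * ‖gradient lS w‖) := by
          have : (0:ℝ) ≤ 1 + α * L := by nlinarith
          exact mul_le_mul_of_nonneg_left ih this
      _ = (1 + α * L) ^ (j+1) * ‖gradient lS w‖ := by ring

lemma pathDist_bound {d : ℕ} {α L : ℝ} (hα : 0 ≤ α) (hL : 0 ≤ L)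
    {lS : EuclideanSpace ℝ (Fin d) → ℝ}
    (hgradS : ∀ w u, ‖gradient lS w - gradient lS u‖ ≤ L * ‖w - u‖)
    (w : EuclideanSpace ℝ (Fin d)) :
    ∀ j, L * ‖innerPath α lS j w - w‖ ≤ ((1 + α * L) ^ j - 1) * ‖gradient lS w‖ := by
  intro j
  induction j with
  | zero => simp [innerPath]
  | succ j ih =>
    have hstep : innerPath α lS (j+1) w =
        innerPath α lS j w - α • gradient lS (innerPath α lS j w) := rfl
    have hg := gradPath_bound hα hL hgradS w j
    have htri : ‖innerPath α lS (j+1) w - w‖ ≤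
        ‖innerPath α lS j w - w‖ + α * ‖gradient lS (innerPath α lS j w)‖ := by
      rw [hstep]
      calc ‖innerPath α lS j w - α • gradient lS (innerPath α lS j w) - w‖
          = ‖(innerPath α lS j w - w) + (-(α • gradient lS (innerPath α lS j w)))‖ := by
            congr 1; abel
        _ ≤ ‖innerPath α lS j w - w‖ + ‖-(α • gradient lS (innerPath α lS j w))‖ :=
            norm_add_le _ _
        _ = ‖innerPath α lS j w - w‖ + α * ‖gradient lS (innerPath α lS j w)‖ := by
            rw [norm_neg, norm_smul, Real.norm_of_nonneg hα]
    have h1 : (0:ℝ) ≤ 1 + α * L := by nlinarith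
    have h2 : (0:ℝ) ≤ ‖gradient lS w‖ := norm_nonneg _
    have hpow : (1 + α * L) ^ (j+1) = (1 + α * L) ^ j * (1 + α * L) := pow_succ _ _
    nlinarith [mul_le_mul_of_nonneg_left htri hL, mul_le_mul_of_nonneg_left hg (mul_nonneg hα hL), pow_nonneg h1 j]

lemma metaGrad_bound {d : ℕ} {α L : ℝ} (hα : 0 < α) (hL : 0 < L) (N : ℕ)
    {lS lT : EuclideanSpace ℝ (Fin d) → ℝ} (bi : ℝ)
    (hgradS : ∀ w u, ‖gradient lS w - gradient lS u‖ ≤ L * ‖w - u‖)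
    (hgradT : ∀ w u, ‖gradient lT w - gradient lT u‖ ≤ L * ‖w - u‖)
    (hdiffb : ∀ v, ‖gradient lS v - gradient lT v‖ ≤ bi)
    (w : EuclideanSpace ℝ (Fin d)) :
    ‖metaGrad α N lS lT w - gradient lT w‖ ≤
      ((1 + α * L) ^ (2 * N) - 1) * ‖gradient lT w‖ +
        (1 + α * L) ^ N * ((1 + α * L) ^ N - 1) * bi := by
  set c : ℝ := 1 + α * L with hcdef
  have hc1 : (1:ℝ) ≤ c := by nlinarith
  have hc0 : (0:ℝ) ≤ c := by linarith
  set g := gradient lT w with hg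
  set hval := gradient lT (innerPath α lS N w) with hh
  set P := hessProd α N lS w with hPdef
  have hlip : LipschitzWith L.toNNReal (gradient lS) := by
    apply LipschitzWith.of_dist_le_mul
    intro x y
    rw [dist_eq_norm, dist_eq_norm, Real.coe_toNNReal L hL.le]
    exact hgradS x y
  have hone : ‖(1 : EuclideanSpace ℝ (Fin d) →L[ℝ] EuclideanSpace ℝ (Fin d))‖ ≤ 1 := by
    rw [ContinuousLinearMap.one_def]; exact ContinuousLinearMap.norm_id_le
  have hfac : ∀ a ∈ (List.range N).map (fun j =>
      ContinuousLinearMap.id ℝ (EuclideanSpace ℝ (Fin d)) -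
        α • fderiv ℝ (gradient lS) (innerPath α lS j w)), ‖a‖ ≤ c ∧ ‖a - 1‖ ≤ c - 1 := by
    intro a ha
    simp only [List.mem_map, List.mem_range] at ha
    obtain ⟨j, _, rfl⟩ := ha
    have hH : ‖fderiv ℝ (gradient lS) (innerPath α lS j w)‖ ≤ L := by
      have h := norm_fderiv_le_of_lipschitz ℝ (f := gradient lS)
        (x₀ := innerPath α lS j w) hlip
      rwa [Real.coe_toNNReal L hL.le] at h
    have hsub : (ContinuousLinearMap.id ℝ (EuclideanSpace ℝ (Fin d)) -
        α • fderiv ℝ (gradient lS) (innerPath α lS j w)) - 1 =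
        -(α • fderiv ℝ (gradient lS) (innerPath α lS j w)) := by
      rw [ContinuousLinearMap.one_def]; abel
    have h2 : ‖(ContinuousLinearMap.id ℝ (EuclideanSpace ℝ (Fin d)) -
        α • fderiv ℝ (gradient lS) (innerPath α lS j w)) - 1‖ ≤ c - 1 := by
      rw [hsub, norm_neg]
      have hs : ‖α • fderiv ℝ (gradient lS) (innerPath α lS j w)‖ ≤
          α * ‖fderiv ℝ (gradient lS) (innerPath α lS j w)‖ :=
        (norm_smul_le α (fderiv ℝ (gradient lS) (innerPath α lS j w))).trans_eq (by rw [Real.norm_of_nonneg hα.le])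
      nlinarith [norm_nonneg (fderiv ℝ (gradient lS) (innerPath α lS j w))]
    refine ⟨?_, h2⟩
    calc ‖ContinuousLinearMap.id ℝ (EuclideanSpace ℝ (Fin d)) -
          α • fderiv ℝ (gradient lS) (innerPath α lS j w)‖
        = ‖((ContinuousLinearMap.id ℝ (EuclideanSpace ℝ (Fin d)) -
          α • fderiv ℝ (gradient lS) (innerPath α lS j w)) - 1) + 1‖ := by rw [sub_add_cancel]
      _ ≤ ‖(ContinuousLinearMap.id ℝ (EuclideanSpace ℝ (Fin d)) -
          α • fderiv ℝ (gradient lS) (innerPath α lS j w)) - 1‖ + ‖(1 : _)‖ := norm_add_le _ _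
      _ ≤ (c - 1) + 1 := add_le_add h2 hone
      _ = c := by ring
  obtain ⟨hPn, hP1⟩ := prodBound hone hc1 _ hfac
  rw [List.length_map, List.length_range] at hPn hP1
  have hPn : ‖P‖ ≤ c ^ N := hPn
  have hP1 : ‖P - 1‖ ≤ c ^ N - 1 := hP1
  have hdec : metaGrad α N lS lT w - g = P (hval - g) + (P - 1) g := by
    simp only [metaGrad, ← hPdef, ← hh, ← hg, map_sub, ContinuousLinearMap.sub_apply,
      ContinuousLinearMap.one_apply]
    abel
  have hgS : ‖gradient lS w‖ ≤ bi + ‖g‖ := by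
    calc ‖gradient lS w‖ = ‖(gradient lS w - gradient lT w) + gradient lT w‖ := by
          rw [sub_add_cancel]
      _ ≤ ‖gradient lS w - gradient lT w‖ + ‖gradient lT w‖ := norm_add_le _ _
      _ ≤ bi + ‖g‖ := add_le_add (hdiffb w) le_rfl
  have hcN1 : (0:ℝ) ≤ c ^ N - 1 := by
    have := one_le_pow₀ (n := N) hc1
    linarith
  have hd : ‖hval - g‖ ≤ (c ^ N - 1) * (‖g‖ + bi) := by
    calc ‖hval - g‖ ≤ L * ‖innerPath α lS N w - w‖ := hgradT _ _
      _ ≤ (c ^ N - 1) * ‖gradient lS w‖ := pathDist_bound hα.le hL.le hgradS w N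
      _ ≤ (c ^ N - 1) * (‖g‖ + bi) := by
          apply mul_le_mul_of_nonneg_left _ hcN1
          linarith
  have hbnn : (0:ℝ) ≤ bi := le_trans (norm_nonneg _) (hdiffb w)
  have hcNpos : (0:ℝ) ≤ c ^ N := pow_nonneg hc0 _
  have h2N : c ^ (2 * N) = c ^ N * c ^ N := by rw [two_mul, pow_add]
  calc ‖metaGrad α N lS lT w - g‖ = ‖P (hval - g) + (P - 1) g‖ := by rw [hdec]
    _ ≤ ‖P (hval - g)‖ + ‖(P - 1) g‖ := norm_add_le _ _
    _ ≤ ‖P‖ * ‖hval - g‖ + ‖P - 1‖ * ‖g‖ :=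
        add_le_add (P.le_opNorm _) ((P - 1).le_opNorm _)
    _ ≤ c ^ N * ((c ^ N - 1) * (‖g‖ + bi)) + (c ^ N - 1) * ‖g‖ := by
        apply add_le_add
        · apply mul_le_mul hPn hd (norm_nonneg _) hcNpos
        · exact mul_le_mul_of_nonneg_right hP1 (norm_nonneg _)
    _ ≤ (c ^ (2 * N) - 1) * ‖g‖ + c ^ N * (c ^ N - 1) * bi := by
        rw [h2N]; nlinarith [norm_nonneg g]

set_option maxHeartbeats 1000000 in
theorem stmt16 {d : ℕ} (hd : 1 ≤ d) (α L σ : ℝ) (hα : 0 < α) (hL : 0 < L) (hσ : 0 < σ)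
    (N : ℕ) (hN : 1 ≤ N)
    (hαsmall : α < ((2 : ℝ) ^ ((1 : ℝ) / (2 * (N : ℝ))) - 1) / L)
    {I : Type*} [MeasurableSpace I] (μ : Measure I) [IsProbabilityMeasure μ]
    (lS lT : I → EuclideanSpace ℝ (Fin d) → ℝ)
    (hlS : ∀ i, ContDiff ℝ 2 (lS i)) (hlT : ∀ i, ContDiff ℝ 2 (lT i))
    (hgradS : ∀ i, ∀ w u : EuclideanSpace ℝ (Fin d),
      ‖gradient (lS i) w - gradient (lS i) u‖ ≤ L * ‖w - u‖)
    (hgradT : ∀ i, ∀ w u : EuclideanSpace ℝ (Fin d),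
      ‖gradient (lT i) w - gradient (lT i) u‖ ≤ L * ‖w - u‖)
    (b : I → ℝ) (hbnn : ∀ i, 0 ≤ b i) (hbint : Integrable b μ)
    (hdiffb : ∀ i, ∀ v : EuclideanSpace ℝ (Fin d),
      ‖gradient (lS i) v - gradient (lT i) v‖ ≤ b i)
    (hgTint : ∀ w : EuclideanSpace ℝ (Fin d), Integrable (fun i => gradient (lT i) w) μ)
    (hgT2int : ∀ w : EuclideanSpace ℝ (Fin d),
      Integrable (fun i => ‖gradient (lT i) w‖ ^ 2) μ)
    (hgTnint : ∀ w : EuclideanSpace ℝ (Fin d),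
      Integrable (fun i => ‖gradient (lT i) w‖) μ)
    (hGint : ∀ w : EuclideanSpace ℝ (Fin d),
      Integrable (fun i => metaGrad α N (lS i) (lT i) w) μ)
    (hvar : ∀ w : EuclideanSpace ℝ (Fin d),
      (∫ i, ‖gradient (lT i) w - ∫ i', gradient (lT i') w ∂μ‖ ^ 2 ∂μ) ≤ σ ^ 2) :
    ∀ w : EuclideanSpace ℝ (Fin d),
      ‖∫ i, gradient (lT i) w ∂μ‖ ≤
        (1 / (2 - (1 + α * L) ^ (2 * N))) * ‖∫ i, metaGrad α N (lS i) (lT i) w ∂μ‖ +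
          (((1 + α * L) ^ (2 * N) - 1) * σ +
              (1 + α * L) ^ N * ((1 + α * L) ^ N - 1) * (∫ i, b i ∂μ)) /
            (2 - (1 + α * L) ^ (2 * N)) := by
  intro w
  have hc1 : (1:ℝ) ≤ 1 + α * L := by nlinarith
  have hc0 : (0:ℝ) ≤ 1 + α * L := by linarith
  set c : ℝ := 1 + α * L with hcdef
  set ρ : ℝ := c ^ (2 * N) with hρdef
  set β : ℝ := c ^ N with hβdef
  have hβ1 : (1:ℝ) ≤ β := one_le_pow₀ hc1
  have hρ1 : (1:ℝ) ≤ ρ := one_le_pow₀ hc1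
  -- ρ < 2
  have hNR : (0:ℝ) < 2 * (N:ℝ) := by
    have : (1:ℝ) ≤ (N:ℝ) := by exact_mod_cast hN
    linarith
  have ht : c < (2:ℝ) ^ ((1:ℝ)/(2*(N:ℝ))) := by
    have h := (lt_div_iff₀ hL).mp hαsmall
    rw [hcdef]; nlinarith
  have h2Npos : 2 * N ≠ 0 := by omega
  have hρlt2 : ρ < 2 := by
    have h1 : ρ < ((2:ℝ) ^ ((1:ℝ)/(2*(N:ℝ)))) ^ (2*N) := by
      rw [hρdef]; exact pow_lt_pow_left₀ ht hc0 h2Npos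
    have h2 : ((2:ℝ) ^ ((1:ℝ)/(2*(N:ℝ)))) ^ (2*N) = 2 := by
      rw [← Real.rpow_natCast ((2:ℝ) ^ ((1:ℝ)/(2*(N:ℝ)))) (2*N),
        ← Real.rpow_mul (by norm_num : (0:ℝ) ≤ 2)]
      push_cast
      rw [one_div, inv_mul_cancel₀ (by positivity), Real.rpow_one]
    linarith
  have hC : (0:ℝ) < 2 - ρ := by linarith
  -- notation
  set G : I → EuclideanSpace ℝ (Fin d) := fun i => metaGrad α N (lS i) (lT i) w with hGdef
  set gT : I → EuclideanSpace ℝ (Fin d) := fun i => gradient (lT i) w with hgTdef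
  have hGi : Integrable G μ := hGint w
  have hgi : Integrable gT μ := hgTint w
  have hGg : Integrable (fun i => G i - gT i) μ := hGi.sub hgi
  -- Step A
  have hA : ‖∫ i, gT i ∂μ‖ ≤ ‖∫ i, G i ∂μ‖ + ∫ i, ‖G i - gT i‖ ∂μ := by
    have hsub : ∫ i, (G i - gT i) ∂μ = (∫ i, G i ∂μ) - ∫ i, gT i ∂μ :=
      integral_sub hGi hgi
    have h1 : ∫ i, gT i ∂μ = (∫ i, G i ∂μ) - ∫ i, (G i - gT i) ∂μ := by
      rw [hsub]; abel
    calc ‖∫ i, gT i ∂μ‖ = ‖(∫ i, G i ∂μ) - ∫ i, (G i - gT i) ∂μ‖ := by rw [← h1]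
      _ ≤ ‖∫ i, G i ∂μ‖ + ‖∫ i, (G i - gT i) ∂μ‖ := norm_sub_le _ _
      _ ≤ ‖∫ i, G i ∂μ‖ + ∫ i, ‖G i - gT i‖ ∂μ := by
          gcongr; exact norm_integral_le_integral_norm _
  -- Step B
  have hdom : Integrable (fun i => (ρ - 1) * ‖gT i‖ + β * (β - 1) * b i) μ :=
    ((hgTnint w).const_mul _).add (hbint.const_mul _)
  have hB : ∫ i, ‖G i - gT i‖ ∂μ ≤
      (ρ - 1) * (∫ i, ‖gT i‖ ∂μ) + β * (β - 1) * (∫ i, b i ∂μ) := by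
    have hmono : ∫ i, ‖G i - gT i‖ ∂μ ≤
        ∫ i, ((ρ - 1) * ‖gT i‖ + β * (β - 1) * b i) ∂μ := by
      refine integral_mono hGg.norm hdom ?_
      intro i
      exact metaGrad_bound hα hL N (b i) (hgradS i) (hgradT i) (hdiffb i) w
    rw [integral_add ((hgTnint w).const_mul _) (hbint.const_mul _),
      integral_const_mul, integral_const_mul] at hmono
    exact hmono
  -- Step C
  set gbar : EuclideanSpace ℝ (Fin d) := ∫ i, gT i ∂μ with hgbar
  have hmeas : AEStronglyMeasurable (fun i => ‖gT i - gbar‖) μ :=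
    (hgi.aestronglyMeasurable.sub aestronglyMeasurable_const).norm
  have hf2int : Integrable (fun i => ‖gT i - gbar‖ ^ 2) μ := by
    refine Integrable.mono' (((hgT2int w).const_mul 2).add (integrable_const (2 * ‖gbar‖^2)))
      ((hmeas.aemeasurable.pow_const 2).aestronglyMeasurable) ?_
    filter_upwards with i
    have h1 : ‖gT i - gbar‖ ≤ ‖gT i‖ + ‖gbar‖ := norm_sub_le _ _
    have h2 : (0:ℝ) ≤ ‖gT i - gbar‖ := norm_nonneg _
    rw [Real.norm_eq_abs, abs_of_nonneg (by positivity)]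
    show ‖gT i - gbar‖ ^ 2 ≤ 2 * ‖gT i‖ ^ 2 + 2 * ‖gbar‖ ^ 2
    nlinarith [sq_nonneg (‖gT i‖ - ‖gbar‖), mul_self_le_mul_self h2 h1,
      norm_nonneg (gT i), norm_nonneg gbar]
  have hmem : MemLp (fun i => ‖gT i - gbar‖) 2 μ :=
    (memLp_two_iff_integrable_sq hmeas).2 hf2int
  have hfint : Integrable (fun i => ‖gT i - gbar‖) μ := (hgi.sub (integrable_const _)).norm
  have hvarnn := ProbabilityTheory.variance_nonneg (fun i => ‖gT i - gbar‖) μ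
  rw [ProbabilityTheory.variance_eq_sub hmem] at hvarnn
  have hsq : (∫ i, ‖gT i - gbar‖ ∂μ) ^ 2 ≤ ∫ i, ‖gT i - gbar‖ ^ 2 ∂μ := by
    have heq : (∫ i, ((fun i => ‖gT i - gbar‖) ^ 2) i ∂μ) = ∫ i, ‖gT i - gbar‖ ^ 2 ∂μ := by
      simp [Pi.pow_apply]
    rw [heq] at hvarnn
    linarith
  have hfσ : ∫ i, ‖gT i - gbar‖ ∂μ ≤ σ := by
    have h1 : ∫ i, ‖gT i - gbar‖ ^ 2 ∂μ ≤ σ ^ 2 := hvar w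
    have h2 : (0:ℝ) ≤ ∫ i, ‖gT i - gbar‖ ∂μ := integral_nonneg fun i => norm_nonneg _
    nlinarith
  have hCbnd : ∫ i, ‖gT i‖ ∂μ ≤ σ + ‖gbar‖ := by
    have hmono : ∫ i, ‖gT i‖ ∂μ ≤ ∫ i, (‖gT i - gbar‖ + ‖gbar‖) ∂μ := by
      refine integral_mono (hgTnint w) (hfint.add (integrable_const _)) ?_
      intro i
      calc ‖gT i‖ = ‖(gT i - gbar) + gbar‖ := by rw [sub_add_cancel]
        _ ≤ ‖gT i - gbar‖ + ‖gbar‖ := norm_add_le _ _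
    rw [integral_add hfint (integrable_const _), integral_const] at hmono
    simp only [probReal_univ, measure_univ, ENNReal.toReal_one, one_smul, smul_eq_mul, one_mul] at hmono
    linarith
  -- combine
  have hbB : (0:ℝ) ≤ ∫ i, b i ∂μ := integral_nonneg hbnn
  have hmain : (2 - ρ) * ‖gbar‖ ≤
      ‖∫ i, G i ∂μ‖ + ((ρ - 1) * σ + β * (β - 1) * (∫ i, b i ∂μ)) := by
    have h3 := mul_le_mul_of_nonneg_left hCbnd (by linarith : (0:ℝ) ≤ ρ - 1)
    rw [mul_add] at h3
    have e1 : (2 - ρ) * ‖gbar‖ = 2 * ‖gbar‖ - ρ * ‖gbar‖ := by ring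
    have e2 : (ρ - 1) * ‖gbar‖ = ρ * ‖gbar‖ - ‖gbar‖ := by ring
    linarith [hA, hB, h3]
  have hform : (1 / (2 - ρ)) * ‖∫ i, G i ∂μ‖ +
      ((ρ - 1) * σ + β * (β - 1) * (∫ i, b i ∂μ)) / (2 - ρ) =
      (‖∫ i, G i ∂μ‖ + ((ρ - 1) * σ + β * (β - 1) * (∫ i, b i ∂μ))) / (2 - ρ) := by
    field_simp
  rw [hform, le_div_iff₀ hC]
  linarith [hmain]
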